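/- If a lambda-calculus expression a has a key redex and a single-step reduces to b without contracting that key redex, then b also has a key redex, and red_k(a) multi-step reduces to red_k(b). -/

import Mathlib

/-- Expressions of a pure type system: sorts, de Bruijn variables,
dependent products, annotated abstractions, applications. -/
inductive Expr : Type
  | sort : Nat → Expr
  | var : Nat → Expr
  | pi : Expr → Expr → Expr
  | lam : Expr → Expr → Expr
  | app : Expr → Expr → Expr
  deriving DecidableEq

/-- Lift free de Bruijn variables `≥ k` by `d`. -/
def Expr.lift (d k : Nat) : Expr → Expr
  | .sort s => .sort s
  | .var n => if n < k then .var n else .var (n + d)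
  | .pi A B => .pi (Expr.lift d k A) (Expr.lift d (k+1) B)
  | .lam A b => .lam (Expr.lift d k A) (Expr.lift d (k+1) b)
  | .app a b => .app (Expr.lift d k a) (Expr.lift d k b)

/-- Capture-avoiding substitution of `e` for variable `k`. -/
def Expr.subst (e : Expr) (k : Nat) : Expr → Expr
  | .sort s => .sort s
  | .var n => if n < k then .var n else if n = k then Expr.lift k 0 e else .var (n - 1)
  | .pi A B => .pi (Expr.subst e k A) (Expr.subst e (k+1) B)
  | .lam A b => .lam (Expr.subst e k A) (Expr.subst e (k+1) b)
  | .app a b => .app (Expr.subst e k a) (Expr.subst e k b)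

/-- One-step beta reduction, with full congruence rules. -/
inductive Step : Expr → Expr → Prop
  | beta (A b a : Expr) : Step (.app (.lam A b) a) (Expr.subst a 0 b)
  | pi1 {A A' B} : Step A A' → Step (.pi A B) (.pi A' B)
  | pi2 {A B B'} : Step B B' → Step (.pi A B) (.pi A B')
  | lam1 {A A' b} : Step A A' → Step (.lam A b) (.lam A' b)
  | lam2 {A b b'} : Step b b' → Step (.lam A b) (.lam A b')
  | app1 {a a' b} : Step a a' → Step (.app a b) (.app a' b)
  | app2 {a b b'} : Step b b' → Step (.app a b) (.app a b')

/-- Multi-step reduction. -/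
def Steps : Expr → Expr → Prop := Relation.ReflTransGen Step

/-- Strong normalization: no infinite reduction sequences from `a`. -/
def SN (a : Expr) : Prop := Acc (fun x y => Step y x) a

/-- Base expressions: a variable applied to a list of arguments. -/
inductive Base : Expr → Prop
  | var (n : Nat) : Base (.var n)
  | app {a} (b : Expr) : Base a → Base (.app a b)

/-- Key-redex contraction: `KeyRed a b` means `a` has a key redex and
contracting it yields `b` (i.e. `b = red_k a`). -/
inductive KeyRed : Expr → Expr → Prop
  | beta (A b a : Expr) : KeyRed (.app (.lam A b) a) (Expr.subst a 0 b)
  | app {a a'} (b : Expr) : KeyRed a a' → KeyRed (.app a b) (.app a' b)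

/-- `a` has a key redex. -/
def HasKey (a : Expr) : Prop := ∃ b, KeyRed a b

/-- Saturated sets of expressions. -/
def Saturated (S : Set Expr) : Prop :=
  (∀ a ∈ S, SN a) ∧
  (∀ a, Base a → SN a → a ∈ S) ∧
  (∀ a b, SN a → KeyRed a b → b ∈ S → a ∈ S)

/-- Function space on sets of expressions. -/
def Arrow (S₁ S₂ : Set Expr) : Set Expr := {a | ∀ b ∈ S₁, Expr.app a b ∈ S₂}
namespace Expr

theorem lift_lift_le {d d' : Nat} (e : Expr) (i j : Nat) (h : i ≤ j) :
    lift d i (lift d' j e) = lift d' (j + d) (lift d i e) := by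
  induction e generalizing i j with
  | sort s => simp [lift]
  | var n =>
      simp only [lift]
      split_ifs <;> simp only [lift] <;> split_ifs <;>
        first | rfl | omega | (congr 1; omega)
  | pi A B ihA ihB =>
      simp only [lift, ihA i j h, ihB (i+1) (j+1) (by omega)]
      congr 1 <;> congr 1 <;> omega
  | lam A b ihA ihb =>
      simp only [lift, ihA i j h, ihb (i+1) (j+1) (by omega)]
      congr 1 <;> congr 1 <;> omega
  | app a b iha ihb => simp [lift, iha i j h, ihb i j h]

theorem lift_lift_absorb {d d' : Nat} (e : Expr) (i j : Nat)
    (h1 : i ≤ j) (h2 : j ≤ i + d) :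
    lift d' j (lift d i e) = lift (d + d') i e := by
  induction e generalizing i j with
  | sort s => simp [lift]
  | var n =>
      simp only [lift]
      split_ifs <;> simp only [lift] <;> split_ifs <;>
        first | rfl | omega | (congr 1; omega)
  | pi A B ihA ihB =>
      simp [lift, ihA i j h1 h2, ihB (i+1) (j+1) (by omega) (by omega)]
  | lam A b ihA ihb =>
      simp [lift, ihA i j h1 h2, ihb (i+1) (j+1) (by omega) (by omega)]
  | app a b iha ihb => simp [lift, iha i j h1 h2, ihb i j h1 h2]

theorem lift_subst {d : Nat} (t u : Expr) (j k : Nat) (h : j ≤ k) :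
    lift d k (subst u j t) = subst (lift d (k - j) u) j (lift d (k+1) t) := by
  induction t generalizing j k with
  | sort s => simp [lift, subst]
  | var n =>
      simp only [lift, subst]
      split_ifs <;> simp only [lift, subst] <;> split_ifs <;>
        first
        | rfl | omega | (congr 1; omega)
        | (rw [lift_lift_le _ 0 (k - j) (by omega)]; congr 1; omega)
  | pi A B ihA ihB =>
      simp only [lift, subst, ihA j k h, ihB (j+1) (k+1) (by omega)]
      congr 2 <;> congr 1 <;> omega
  | lam A b ihA ihb =>
      simp only [lift, subst, ihA j k h, ihb (j+1) (k+1) (by omega)]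
      congr 2 <;> congr 1 <;> omega
  | app a b iha ihb => simp [lift, subst, iha j k h, ihb j k h]

theorem subst_lift_comm {e : Expr} (u : Expr) (i j k : Nat) (h : i + j ≤ k) :
    subst e k (lift j i u) = lift j i (subst e (k - j) u) := by
  induction u generalizing i k with
  | sort s => simp [lift, subst]
  | var n =>
      simp only [lift, subst]
      split_ifs <;> simp only [lift, subst] <;> split_ifs <;>
        first
        | rfl | omega | (congr 1; omega)
        | (rw [lift_lift_absorb _ 0 i (by omega) (by omega)]; congr 1; omega)
  | pi A B ihA ihB =>
      simp only [lift, subst, ihA i k h, ihB (i+1) (k+1) (by omega)]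
      congr 2 <;> congr 1 <;> omega
  | lam A b ihA ihb =>
      simp only [lift, subst, ihA i k h, ihb (i+1) (k+1) (by omega)]
      congr 2 <;> congr 1 <;> omega
  | app a b iha ihb => simp [lift, subst, iha i k h, ihb i k h]

theorem subst_lift_cancel {w : Expr} (e : Expr) (i p d : Nat)
    (h1 : i ≤ p) (h2 : p < i + d) :
    subst w p (lift d i e) = lift (d - 1) i e := by
  induction e generalizing i p with
  | sort s => simp [lift, subst]
  | var n =>
      simp only [lift, subst]
      split_ifs <;> simp only [lift, subst] <;> split_ifs <;>
        first | rfl | omega | (congr 1; omega)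
  | pi A B ihA ihB =>
      simp [lift, subst, ihA i p h1 h2, ihB (i+1) (p+1) (by omega) (by omega)]
  | lam A b ihA ihb =>
      simp [lift, subst, ihA i p h1 h2, ihb (i+1) (p+1) (by omega) (by omega)]
  | app a b iha ihb => simp [lift, subst, iha i p h1 h2, ihb i p h1 h2]

theorem subst_subst {e : Expr} (t u : Expr) (j k : Nat) (h : j ≤ k) :
    subst e k (subst u j t) = subst (subst e (k - j) u) j (subst e (k+1) t) := by
  induction t generalizing j k with
  | sort s => simp [lift, subst]
  | var n =>
      simp only [subst]
      split_ifs <;> (try simp only [lift, subst]) <;> (try split_ifs) <;>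
        first
        | rfl | omega | (exfalso; omega) | (congr 1; omega)
        | exact subst_lift_comm u 0 j k (by omega)
        | ((rw [subst_lift_cancel e 0 j (k+1) (by omega) (by omega)]) <;> (congr 1 <;> omega))
  | pi A B ihA ihB =>
      simp only [subst, ihA j k h, ihB (j+1) (k+1) (by omega)]
      congr 2 <;> congr 1 <;> omega
  | lam A b ihA ihb =>
      simp only [subst, ihA j k h, ihb (j+1) (k+1) (by omega)]
      congr 2 <;> congr 1 <;> omega
  | app a b iha ihb => simp [subst, iha j k h, ihb j k h]

end Expr

theorem step_lift {e e' : Expr} (h : Step e e') (d k : Nat) :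
    Step (Expr.lift d k e) (Expr.lift d k e') := by
  induction h generalizing k with
  | beta A b a =>
      have := Expr.lift_subst (d := d) b a 0 k (Nat.zero_le _)
      simp only [Nat.sub_zero] at this
      rw [this]
      exact Step.beta _ _ _
  | pi1 _ ih => exact Step.pi1 (ih k)
  | pi2 _ ih => exact Step.pi2 (ih (k+1))
  | lam1 _ ih => exact Step.lam1 (ih k)
  | lam2 _ ih => exact Step.lam2 (ih (k+1))
  | app1 _ ih => exact Step.app1 (ih k)
  | app2 _ ih => exact Step.app2 (ih k)

theorem step_subst_body {t t' : Expr} (h : Step t t') (e : Expr) (k : Nat) :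
    Step (Expr.subst e k t) (Expr.subst e k t') := by
  induction h generalizing k with
  | beta A b a =>
      have := Expr.subst_subst (e := e) b a 0 k (Nat.zero_le _)
      simp only [Nat.sub_zero] at this
      rw [this]
      exact Step.beta _ _ _
  | pi1 _ ih => exact Step.pi1 (ih k)
  | pi2 _ ih => exact Step.pi2 (ih (k+1))
  | lam1 _ ih => exact Step.lam1 (ih k)
  | lam2 _ ih => exact Step.lam2 (ih (k+1))
  | app1 _ ih => exact Step.app1 (ih k)
  | app2 _ ih => exact Step.app2 (ih k)

theorem steps_congr {f : Expr → Expr} (hf : ∀ x y, Step x y → Step (f x) (f y))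
    {a b : Expr} (h : Steps a b) : Steps (f a) (f b) :=
  Relation.ReflTransGen.lift f hf _ _ h

theorem steps_subst_arg {e e' : Expr} (h : Step e e') (t : Expr) (k : Nat) :
    Steps (Expr.subst e k t) (Expr.subst e' k t) := by
  induction t generalizing k with
  | sort s => exact Relation.ReflTransGen.refl
  | var n =>
      simp only [Expr.subst]
      split_ifs
      · exact Relation.ReflTransGen.refl
      · exact Relation.ReflTransGen.single (step_lift h k 0)
      · exact Relation.ReflTransGen.refl
  | pi A B ihA ihB =>
      simp only [Expr.subst]
      exact Relation.ReflTransGen.trans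
        (steps_congr (fun x y hx => Step.pi1 (B := Expr.subst e (k+1) B) hx) (ihA k))
        (steps_congr (fun x y hx => Step.pi2 (A := Expr.subst e' k A) hx) (ihB (k+1)))
  | lam A b ihA ihb =>
      simp only [Expr.subst]
      exact Relation.ReflTransGen.trans
        (steps_congr (fun x y hx => Step.lam1 (b := Expr.subst e (k+1) b) hx) (ihA k))
        (steps_congr (fun x y hx => Step.lam2 (A := Expr.subst e' k A) hx) (ihb (k+1)))
  | app a b iha ihb =>
      simp only [Expr.subst]
      exact Relation.ReflTransGen.trans
        (steps_congr (fun x y hx => Step.app1 (b := Expr.subst e k b) hx) (iha k))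
        (steps_congr (fun x y hx => Step.app2 (a := Expr.subst e' k a) hx) (ihb k))


/-- If `a` has key redex with contractum `ka`, and `a ⇝ b` without contracting
that key redex, then `b` has a key redex and `red_k a ⇝* red_k b`. -/
theorem key_redex_step {a ka b : Expr}
    (hk : KeyRed a ka) (hs : Step a b) (hne : ¬ KeyRed a b) :
    ∃ kb, KeyRed b kb ∧ Steps ka kb := by
  induction hk generalizing b with
  | beta A t u =>
      cases hs with
      | beta => exact absurd (KeyRed.beta A t u) hne
      | app1 h =>
          cases h with
          | lam1 h' =>
              exact ⟨Expr.subst u 0 t, KeyRed.beta _ _ _, Relation.ReflTransGen.refl⟩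
          | lam2 h' =>
              exact ⟨Expr.subst u 0 _, KeyRed.beta _ _ _,
                Relation.ReflTransGen.single (step_subst_body h' u 0)⟩
      | app2 h =>
          exact ⟨Expr.subst _ 0 t, KeyRed.beta _ _ _, steps_subst_arg h t 0⟩
  | app g hkf ih =>
      rename_i f f'
      cases hs with
      | beta => cases hkf
      | app1 h =>
          have hne' : ¬ KeyRed f _ := fun hx => hne (KeyRed.app g hx)
          obtain ⟨f₂', hk2, hst⟩ := ih h hne'
          exact ⟨Expr.app f₂' g, KeyRed.app g hk2,
            steps_congr (fun x y hx => Step.app1 (b := g) hx) hst⟩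
      | app2 h =>
          exact ⟨Expr.app f' _, KeyRed.app _ hkf,
            Relation.ReflTransGen.single (Step.app2 h)⟩
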